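/- Let V be a real vector space, let F be a geometric mean closed Archimedean vector lattice, and let T : V × V → F be a bilinear, symmetric, positive semidefinite map. Then for all u, v ∈ V, the infimum inf{ |z|⁻¹·T(z·u − v, z·u − v) : z ∈ ℝ, z ≠ 0 } exists in F. -/

import Mathlib

/-- **Theorem 3.1(1) (real case).** For a bilinear, symmetric, positive semidefinite map
`T : V × V → F` into a geometric mean closed Archimedean vector lattice `F`, the infimum
`inf {|z|⁻¹ • T(z•u - v, z•u - v) : z ∈ ℝ, z ≠ 0}` exists in `F`. -/
theorem stmt1 {V : Type*} [AddCommGroup V] [Module ℝ V]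
    {F : Type*} [AddCommGroup F] [Lattice F]
    [CovariantClass F F (· + ·) (· ≤ ·)]
    [Module ℝ F] [PosSMulMono ℝ F]
    (harch : ∀ f g : F, (∀ n : ℕ, (n : ℝ) • f ≤ g) → f ≤ 0)
    (hgm : ∀ f g : F, 0 ≤ f → 0 ≤ g →
      ∃ m, IsGLB {x | ∃ θ : ℝ, 0 < θ ∧ x = θ • f + θ⁻¹ • g} m)
    (T : V →ₗ[ℝ] V →ₗ[ℝ] F)
    (hsymm : ∀ u v : V, T u v = T v u)
    (hpos : ∀ v : V, 0 ≤ T v v)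
    (u v : V) :
    ∃ m, IsGLB {x | ∃ z : ℝ, z ≠ 0 ∧ x = |z|⁻¹ • T (z • u - v) (z • u - v)} m := by
  set f := T u u with hf
  set g := T v v with hg
  set w := T u v with hw
  obtain ⟨m0, hlb, hgl⟩ := hgm f g (hpos u) (hpos v)
  have expand : ∀ z : ℝ, T (z • u - v) (z • u - v) = z • (z • f) - z • w - (z • w - g) := by
    intro z
    simp only [map_sub, map_smul, LinearMap.sub_apply, LinearMap.smul_apply, smul_sub, hsymm v u,
      ← hf, ← hg, ← hw]
  have keyp : ∀ z : ℝ, 0 < z →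
      |z|⁻¹ • T (z • u - v) (z • u - v) = (z • f + z⁻¹ • g) - (w + w) := by
    intro z hz
    rw [abs_of_pos hz, expand]
    match_scalars <;> (field_simp; try ring_nf) <;> (field_simp [hz.ne]; try ring)
  have keyn : ∀ z : ℝ, z < 0 →
      |z|⁻¹ • T (z • u - v) (z • u - v) = ((-z) • f + (-z)⁻¹ • g) + (w + w) := by
    intro z hz
    rw [abs_of_neg hz, expand]
    have hz' : z ≠ 0 := hz.ne
    match_scalars <;> (field_simp; try ring_nf) <;> (field_simp [hz.ne]; try ring)
  refine ⟨(m0 - (w + w)) ⊓ (m0 + (w + w)), ?_, ?_⟩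
  · rintro x ⟨z, hz, rfl⟩
    rcases hz.lt_or_gt with hneg | hposz
    · rw [keyn z hneg]
      refine inf_le_right.trans ?_
      exact add_le_add_left (hlb ⟨-z, by linarith, rfl⟩) _
    · rw [keyp z hposz]
      refine inf_le_left.trans ?_
      exact sub_le_sub_right (hlb ⟨z, hposz, rfl⟩) _
  · intro b hb
    refine le_inf ?_ ?_
    · rw [le_sub_iff_add_le]
      refine hgl ?_
      rintro a ⟨θ, hθ, rfl⟩
      have hx : b ≤ (θ • f + θ⁻¹ • g) - (w + w) := by
        have := hb ⟨θ, hθ.ne', (keyp θ hθ).symm⟩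
        simpa using this
      calc b + (w + w) ≤ ((θ • f + θ⁻¹ • g) - (w + w)) + (w + w) := add_le_add_left hx _
        _ = θ • f + θ⁻¹ • g := by abel
    · rw [← sub_le_iff_le_add]
      refine hgl ?_
      rintro a ⟨θ, hθ, rfl⟩
      have hx : b ≤ (θ • f + θ⁻¹ • g) + (w + w) := by
        have hmem : |(-θ)|⁻¹ • T ((-θ) • u - v) ((-θ) • u - v)
            = (θ • f + θ⁻¹ • g) + (w + w) := by
          rw [keyn (-θ) (by linarith)]; simp
        have hle := hb ⟨-θ, neg_ne_zero.mpr hθ.ne', rfl⟩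
        rwa [hmem] at hle
      calc b - (w + w) ≤ ((θ • f + θ⁻¹ • g) + (w + w)) - (w + w) := sub_le_sub_right hx _
        _ = θ • f + θ⁻¹ • g := by abel
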